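/- arXiv:2110.02212 — 6 statements merged into one kernel-verified Lean document; each statement's English description precedes it below -/
import Mathlib

section
/- For all real numbers ε₁ ∈ [0,1) and ε₂ ∈ [0,1] with ε₁ + √ε₂ < 1, the inequality (1 - ε₁ - √ε₂)⁻¹ ≤ (√(1-ε₂) - √ε₁)⁻² holds if and only if (1/2)(1 - √(1-ε₂))(1 - √ε₂) ≤ ε₁ ≤ (1/2)(1 + √(1-ε₂))(1 - √ε₂). -/
set_option maxHeartbeats 2000000


/-- For ε₁ ∈ [0,1), ε₂ ∈ [0,1] with ε₁ + √ε₂ < 1, the inequality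
`(1 - ε₁ - √ε₂)⁻¹ ≤ (√(1-ε₂) - √ε₁)⁻²` holds iff
`(1/2)(1 - √(1-ε₂))(1 - √ε₂) ≤ ε₁ ≤ (1/2)(1 + √(1-ε₂))(1 - √ε₂)`. -/
theorem yield_cost_error_region (ε₁ ε₂ : ℝ)
    (h₁ : ε₁ ∈ Set.Ico (0 : ℝ) 1) (h₂ : ε₂ ∈ Set.Icc (0 : ℝ) 1)
    (h : ε₁ + Real.sqrt ε₂ < 1) :
    (1 - ε₁ - Real.sqrt ε₂)⁻¹ ≤ ((Real.sqrt (1 - ε₂) - Real.sqrt ε₁) ^ 2)⁻¹ ↔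
      (1 / 2) * (1 - Real.sqrt (1 - ε₂)) * (1 - Real.sqrt ε₂) ≤ ε₁ ∧
        ε₁ ≤ (1 / 2) * (1 + Real.sqrt (1 - ε₂)) * (1 - Real.sqrt ε₂) := by
  obtain ⟨hε₁0, hε₁1⟩ := h₁
  obtain ⟨hε₂0, hε₂1⟩ := h₂
  set s := Real.sqrt ε₂ with hs
  set a := Real.sqrt ε₁ with ha
  set c := Real.sqrt (1 - ε₂) with hc
  have hs0 : 0 ≤ s := Real.sqrt_nonneg _
  have ha0 : 0 ≤ a := Real.sqrt_nonneg _
  have hc0 : 0 ≤ c := Real.sqrt_nonneg _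
  have hs2 : s ^ 2 = ε₂ := Real.sq_sqrt hε₂0
  have ha2 : a ^ 2 = ε₁ := Real.sq_sqrt hε₁0
  have hc2 : c ^ 2 = 1 - ε₂ := Real.sq_sqrt (by linarith)
  have hs1 : s < 1 := by linarith
  have hc1 : c ≤ 1 := by nlinarith
  have hpos : 0 < 1 - ε₁ - s := by linarith
  constructor
  · intro hle
    have hne : (c - a) ^ 2 ≠ 0 := by
      intro h0
      rw [h0, inv_zero] at hle
      have := inv_pos.mpr hpos
      linarith
    have hq : 0 < (c - a) ^ 2 := lt_of_le_of_ne (sq_nonneg _) (Ne.symm hne)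
    have key : (c - a) ^ 2 ≤ 1 - ε₁ - s := by
      rw [inv_le_inv₀ hpos hq] at hle
      exact hle
    have hkey2 : 2 * ε₁ + s - s ^ 2 ≤ 2 * a * c := by nlinarith
    have hx : 0 ≤ 2 * ε₁ + s - s ^ 2 := by nlinarith
    have hsq : (2 * ε₁ + s - s ^ 2) ^ 2 ≤ 4 * ε₁ * (1 - ε₂) := by nlinarith
    have hprod : (2 * ε₁ - (1 - s) * (1 - c)) * (2 * ε₁ - (1 - s) * (1 + c)) ≤ 0 := by
      nlinarith
    have hcs : 0 ≤ (1 - s) * c := mul_nonneg (by linarith) hc0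
    have hid : (1 - s) * (1 + c) = (1 - s) * (1 - c) + 2 * ((1 - s) * c) := by ring
    constructor
    · by_contra h'
      push_neg at h'
      have h1 : 2 * ε₁ - (1 - s) * (1 - c) < 0 := by linarith
      have h2 : 2 * ε₁ - (1 - s) * (1 + c) < 0 := by linarith
      have := mul_pos_of_neg_of_neg h1 h2
      linarith
    · by_contra h'
      push_neg at h'
      have h1 : 2 * ε₁ - (1 - s) * (1 + c) > 0 := by linarith
      have h2 : 2 * ε₁ - (1 - s) * (1 - c) > 0 := by linarith
      have := mul_pos h2 h1
      linarith
  · rintro ⟨hlo, hhi⟩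
    have hprod : (2 * ε₁ - (1 - s) * (1 - c)) * (2 * ε₁ - (1 - s) * (1 + c)) ≤ 0 :=
      mul_nonpos_of_nonneg_of_nonpos (by linarith) (by linarith)
    have hsq : (2 * ε₁ + s - s ^ 2) ^ 2 ≤ (2 * a * c) ^ 2 := by nlinarith
    have hx : 0 ≤ 2 * ε₁ + s - s ^ 2 := by nlinarith
    have hkey2 : 2 * ε₁ + s - s ^ 2 ≤ 2 * a * c := by
      have h1 : Real.sqrt ((2 * ε₁ + s - s ^ 2) ^ 2) ≤ Real.sqrt ((2 * a * c) ^ 2) :=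
        Real.sqrt_le_sqrt hsq
      rwa [Real.sqrt_sq hx, Real.sqrt_sq (by positivity)] at h1
    have key : (c - a) ^ 2 ≤ 1 - ε₁ - s := by nlinarith
    have hq : 0 < (c - a) ^ 2 := by
      rcases lt_or_eq_of_le (sq_nonneg (c - a)) with hq | hq
      · exact hq
      have hac : c = a := by
        have := pow_eq_zero_iff (n := 2) (by norm_num) |>.mp hq.symm
        linarith [sub_eq_zero.mp this]
      -- derive contradiction: if a = c then ε₁ = 1 - ε₂ and bounds fail
      exfalso
      have hε₁ : ε₁ = 1 - ε₂ := by rw [← ha2, ← hac, hc2]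
      nlinarith [mul_pos (sub_pos.mpr hs1) (sub_pos.mpr hs1)]
    rw [inv_le_inv₀ hpos hq]
    exact key
end

section
/- For all ε₁, ε₂ ∈ [0,1] with ε₁ + √ε₂ < 1, letting ε' := (√(ε₂(1-ε₁)) + √(ε₁(1-ε₂)))², one has 1 - ε' ≥ 1 - ε₁ - √ε₂; equivalently ε₁ + √ε₂ ≥ (√(ε₁(1-ε₂)) + √(ε₂(1-ε₁)))². -/
/-- For ε₁, ε₂ ∈ [0,1] with ε₁ + √ε₂ < 1 and
ε' := (√(ε₂(1-ε₁)) + √(ε₁(1-ε₂)))², one has 1 - ε' ≥ 1 - ε₁ - √ε₂;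
equivalently ε₁ + √ε₂ ≥ ε'. -/
theorem improved_bound_tighter (ε₁ ε₂ : ℝ)
    (h₁ : ε₁ ∈ Set.Icc (0 : ℝ) 1) (h₂ : ε₂ ∈ Set.Icc (0 : ℝ) 1)
    (h : ε₁ + Real.sqrt ε₂ < 1) :
    let ε' : ℝ := (Real.sqrt (ε₂ * (1 - ε₁)) + Real.sqrt (ε₁ * (1 - ε₂))) ^ 2
    1 - ε₁ - Real.sqrt ε₂ ≤ 1 - ε' ∧
      (Real.sqrt (ε₁ * (1 - ε₂)) + Real.sqrt (ε₂ * (1 - ε₁))) ^ 2 ≤ ε₁ + Real.sqrt ε₂ := by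
  obtain ⟨h10, h11⟩ := h₁
  obtain ⟨h20, h21⟩ := h₂
  intro ε'
  have ha2 : Real.sqrt ε₁ ^ 2 = ε₁ := Real.sq_sqrt h10
  have hb2 : Real.sqrt (1 - ε₁) ^ 2 = 1 - ε₁ := Real.sq_sqrt (by linarith)
  have hs2 : Real.sqrt ε₂ ^ 2 = ε₂ := Real.sq_sqrt h20
  have ht2 : Real.sqrt (1 - ε₂) ^ 2 = 1 - ε₂ := Real.sq_sqrt (by linarith)
  set a := Real.sqrt ε₁
  set b := Real.sqrt (1 - ε₁)
  set s := Real.sqrt ε₂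
  set t := Real.sqrt (1 - ε₂)
  have hsn : 0 ≤ s := Real.sqrt_nonneg _
  have h1 : Real.sqrt (ε₁ * (1 - ε₂)) = a * t := by rw [Real.sqrt_mul h10]
  have h2 : Real.sqrt (ε₂ * (1 - ε₁)) = s * b := by rw [Real.sqrt_mul h20]
  have hb2' : b ^ 2 = 1 - a ^ 2 := by rw [hb2, ha2]
  have e1 : s ^ 2 + t ^ 2 = 1 := by rw [hs2, ht2]; ring
  have hC : (1 - 2 * a ^ 2) ^ 2 + 4 * a ^ 2 * b ^ 2 = 1 := by
    linear_combination 4 * a ^ 2 * hb2'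
  have e3 : 1 - ((1 - 2 * a ^ 2) * s + 2 * a * b * t) ^ 2
      = ((1 - 2 * a ^ 2) * t - 2 * a * b * s) ^ 2 := by
    linear_combination (-(s ^ 2 + t ^ 2)) * hC - e1
  have hX : (1 - 2 * a ^ 2) * s + 2 * a * b * t ≤ 1 := by
    nlinarith [e3, sq_nonneg ((1 - 2 * a ^ 2) * s + 2 * a * b * t - 1),
      sq_nonneg ((1 - 2 * a ^ 2) * t - 2 * a * b * s)]
  have hid : ε₁ + s - (a * t + s * b) ^ 2
      = s * (1 - ((1 - 2 * a ^ 2) * s + 2 * a * b * t)) := by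
    have ht2' : t ^ 2 = 1 - s ^ 2 := by rw [ht2, hs2]
    rw [← ha2]
    linear_combination (-a ^ 2) * ht2' + (-s ^ 2) * hb2'
  have hprod : 0 ≤ s * (1 - ((1 - 2 * a ^ 2) * s + 2 * a * b * t)) :=
    mul_nonneg hsn (by linarith)
  have key : (a * t + s * b) ^ 2 ≤ ε₁ + s := by linarith
  constructor
  · show 1 - ε₁ - s ≤ 1 - (Real.sqrt (ε₂ * (1 - ε₁)) + Real.sqrt (ε₁ * (1 - ε₂))) ^ 2
    rw [h1, h2]
    nlinarith [key]
  · rw [h1, h2]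
    nlinarith [key]
end

section
/- Fix ε₂ ∈ [0,1] and define g(ε₁) := ε₁ + √ε₂ - (√(ε₁(1-ε₂)) + √(ε₂(1-ε₁)))² for ε₁ ∈ [0, 1-ε₂]. Then g(0) = g(1-ε₂) = √ε₂ - ε₂ ≥ 0, the minimum of g over [0, 1-ε₂] is attained at ε₁* = (1-√ε₂)/2, and g(ε₁*) = 0. -/
lemma key_le (s ε₁ : ℝ) (hs0 : 0 ≤ s) (hs1 : s ≤ 1) (h1 : 0 ≤ ε₁)
    (h2 : ε₁ ≤ 1 - s^2) :
    (Real.sqrt (ε₁ * (1 - s^2)) + Real.sqrt (s^2 * (1 - ε₁))) ^ 2 ≤ ε₁ + s := by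
  set a := Real.sqrt (ε₁ * (1 - s^2)) with ha
  set b := Real.sqrt (s^2 * (1 - ε₁)) with hb
  have ha0 : 0 ≤ a := Real.sqrt_nonneg _
  have hb0 : 0 ≤ b := Real.sqrt_nonneg _
  have h1' : ε₁ ≤ 1 := by nlinarith
  have ha2 : a^2 = ε₁ * (1 - s^2) := Real.sq_sqrt (by nlinarith)
  have hb2 : b^2 = s^2 * (1 - ε₁) := Real.sq_sqrt (by nlinarith)
  have hR : 0 ≤ s - s^2 + 2*s^2*ε₁ := by nlinarith
  have habsq : 4*(a*b)^2 ≤ (s - s^2 + 2*s^2*ε₁)^2 := by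
    have h : (a*b)^2 = a^2*b^2 := by ring
    rw [h, ha2, hb2]
    nlinarith [sq_nonneg (s*(1 - s - 2*ε₁))]
  have h2ab : 2*(a*b) ≤ s - s^2 + 2*s^2*ε₁ := by
    nlinarith [mul_nonneg ha0 hb0]
  nlinarith

lemma key_eq (s : ℝ) (hs0 : 0 ≤ s) (hs1 : s ≤ 1) :
    (Real.sqrt ((1-s)/2 * (1 - s^2)) + Real.sqrt (s^2 * (1 - (1-s)/2))) ^ 2
      = (1-s)/2 + s := by
  set a := Real.sqrt ((1-s)/2 * (1 - s^2)) with ha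
  set b := Real.sqrt (s^2 * (1 - (1-s)/2)) with hb
  have ha0 : 0 ≤ a := Real.sqrt_nonneg _
  have hb0 : 0 ≤ b := Real.sqrt_nonneg _
  have ha2 : a^2 = (1-s)/2 * (1 - s^2) :=
    Real.sq_sqrt (mul_nonneg (by linarith) (by nlinarith))
  have hb2 : b^2 = s^2 * (1 - (1-s)/2) := Real.sq_sqrt (by nlinarith)
  have hR : 0 ≤ s * (1 - s^2) := by nlinarith
  have habsq : 4*(a*b)^2 = (s * (1 - s^2))^2 := by
    have h : (a*b)^2 = a^2*b^2 := by ring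
    rw [h, ha2, hb2]; ring
  have h2ab : 2*(a*b) = s * (1 - s^2) := by
    nlinarith [mul_nonneg ha0 hb0]
  nlinarith

/-- For fixed ε₂ ∈ [0,1], define
g(ε₁) := ε₁ + √ε₂ - (√(ε₁(1-ε₂)) + √(ε₂(1-ε₁)))² on [0, 1-ε₂].  Then
g(0) = g(1-ε₂) = √ε₂ - ε₂ ≥ 0, the minimum of g over [0, 1-ε₂] is attained at
ε₁* = (1-√ε₂)/2 ∈ [0, 1-ε₂], and g(ε₁*) = 0. -/
theorem gap_function_minimum (ε₂ : ℝ) (h₂ : ε₂ ∈ Set.Icc (0 : ℝ) 1) :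
    let g : ℝ → ℝ := fun ε₁ =>
      ε₁ + Real.sqrt ε₂ - (Real.sqrt (ε₁ * (1 - ε₂)) + Real.sqrt (ε₂ * (1 - ε₁))) ^ 2
    let ε₁star : ℝ := (1 - Real.sqrt ε₂) / 2
    g 0 = Real.sqrt ε₂ - ε₂ ∧
      g (1 - ε₂) = Real.sqrt ε₂ - ε₂ ∧
      0 ≤ Real.sqrt ε₂ - ε₂ ∧
      ε₁star ∈ Set.Icc (0 : ℝ) (1 - ε₂) ∧
      (∀ ε₁ ∈ Set.Icc (0 : ℝ) (1 - ε₂), g ε₁star ≤ g ε₁) ∧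
      g ε₁star = 0 := by
  obtain ⟨h0, h1⟩ := h₂
  intro g ε₁star
  set s := Real.sqrt ε₂ with hs
  have hs0 : 0 ≤ s := Real.sqrt_nonneg _
  have hs1 : s ≤ 1 := Real.sqrt_le_one.mpr h1
  have hs2 : s^2 = ε₂ := Real.sq_sqrt h0
  have hgstar : g ε₁star = 0 := by
    show ε₁star + s - (Real.sqrt (ε₁star * (1 - ε₂)) + Real.sqrt (ε₂ * (1 - ε₁star))) ^ 2 = 0
    rw [← hs2]
    have := key_eq s hs0 hs1
    show ε₁star + s - (Real.sqrt (ε₁star * (1 - s^2)) + Real.sqrt (s^2 * (1 - ε₁star))) ^ 2 = 0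
    have hst : ε₁star = (1-s)/2 := rfl
    rw [hst, this]; ring
  refine ⟨?_, ?_, ?_, ?_, ?_, hgstar⟩
  · show (0:ℝ) + s - (Real.sqrt (0 * (1 - ε₂)) + Real.sqrt (ε₂ * (1 - 0))) ^ 2 = s - ε₂
    rw [zero_mul, Real.sqrt_zero]
    have : ε₂ * (1 - 0) = ε₂ := by ring
    rw [this]
    have : (0 + s)^2 = ε₂ := by rw [zero_add]; exact hs2
    rw [this]; ring
  · show (1 - ε₂) + s - (Real.sqrt ((1-ε₂) * (1 - ε₂)) + Real.sqrt (ε₂ * (1 - (1-ε₂)))) ^ 2 = s - ε₂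
    have he : (1:ℝ) - (1 - ε₂) = ε₂ := by ring
    rw [he, Real.sqrt_mul_self (by linarith : 0 ≤ 1 - ε₂), Real.sqrt_mul_self h0]
    ring
  · nlinarith
  · constructor
    · show (0:ℝ) ≤ (1 - s)/2
      linarith
    · show (1 - s)/2 ≤ 1 - ε₂
      nlinarith
  · intro ε₁ hε₁
    obtain ⟨he0, he1⟩ := hε₁
    rw [hgstar]
    show 0 ≤ ε₁ + s - (Real.sqrt (ε₁ * (1 - ε₂)) + Real.sqrt (ε₂ * (1 - ε₁))) ^ 2
    rw [← hs2]
    have := key_le s ε₁ hs0 hs1 he0 (by rw [hs2]; exact he1)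
    linarith
end

section
/- Let ρ, σ, τ be density matrices (positive semidefinite operators with trace 1) on a finite-dimensional Hilbert space, let F denote the fidelity F(ρ,σ) := (‖√ρ √σ‖₁)², and define the purified distance P(ρ,σ) := √(1 - F(ρ,σ)). If P(ρ,σ)² + P(σ,τ)² ≤ 1, then P(ρ,τ) ≤ P(ρ,σ)·√F(σ,τ) + P(σ,τ)·√F(ρ,σ). -/
open Matrix ComplexOrder
open scoped InnerProductSpace ComplexConjugate

variable {n : Type*} [Fintype n] [DecidableEq n]

set_option linter.unusedSectionVars false
set_option maxHeartbeats 1000000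

/-- The positive semidefinite square root of a positive semidefinite matrix
(the Mathlib definition of December 2024, removed since). -/
noncomputable def Matrix.PosSemidef.sqrt {𝕜 : Type*} [RCLike 𝕜] {A : Matrix n n 𝕜}
    (hA : A.PosSemidef) : Matrix n n 𝕜 :=
  hA.1.eigenvectorUnitary.1 * diagonal ((↑) ∘ (√·) ∘ hA.1.eigenvalues) *
  (star hA.1.eigenvectorUnitary : Matrix n n 𝕜)

lemma Matrix.PosSemidef.posSemidef_sqrt {A : Matrix n n ℂ} (hA : A.PosSemidef) :
    hA.sqrt.PosSemidef := by
  have hD : (diagonal ((↑) ∘ (√·) ∘ hA.1.eigenvalues) : Matrix n n ℂ).PosSemidef :=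
    posSemidef_diagonal_iff.mpr fun i => by
      simpa using Complex.zero_le_real.mpr (Real.sqrt_nonneg (hA.1.eigenvalues i))
  exact hD.mul_mul_conjTranspose_same _

lemma Matrix.PosSemidef.sqrt_mul_self {A : Matrix n n ℂ} (hA : A.PosSemidef) :
    hA.sqrt * hA.sqrt = A := by
  have hU : (star hA.1.eigenvectorUnitary : Matrix n n ℂ) * hA.1.eigenvectorUnitary.1 = 1 :=
    Matrix.mem_unitaryGroup_iff'.mp hA.1.eigenvectorUnitary.2
  have hDD : (diagonal ((↑) ∘ (√·) ∘ hA.1.eigenvalues) : Matrix n n ℂ) *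
      diagonal ((↑) ∘ (√·) ∘ hA.1.eigenvalues) = diagonal (RCLike.ofReal ∘ hA.1.eigenvalues) := by
    rw [diagonal_mul_diagonal]
    congr 1
    ext i
    simp only [Function.comp_apply]
    rw [← Complex.ofReal_mul, Real.mul_self_sqrt (hA.eigenvalues_nonneg i)]
    rfl
  conv_rhs => rw [hA.1.spectral_theorem, Unitary.conjStarAlgAut_apply]
  unfold Matrix.PosSemidef.sqrt
  rw [← hDD]
  simp only [Matrix.mul_assoc]
  rw [← Matrix.mul_assoc (star _ : Matrix n n ℂ) hA.1.eigenvectorUnitary.1, hU, Matrix.one_mul]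
  rfl

/-- The trace norm ‖A‖₁ = Tr √(AᴴA) of a complex matrix. -/
noncomputable def traceNorm (A : Matrix n n ℂ) : ℝ :=
  ((Matrix.posSemidef_conjTranspose_mul_self A).sqrt.trace).re

/-- The Uhlmann fidelity F(ρ,σ) := (‖√ρ √σ‖₁)² of two positive semidefinite matrices. -/
noncomputable def fid (ρ σ : Matrix n n ℂ) (hρ : ρ.PosSemidef) (hσ : σ.PosSemidef) : ℝ :=
  (traceNorm (hρ.sqrt * hσ.sqrt)) ^ 2


lemma inner_three {E : Type*} [NormedAddCommGroup E] [InnerProductSpace ℂ E]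
    (u v w : E) (hu : ‖u‖ = 1) (hv : ‖v‖ = 1) (hw : ‖w‖ = 1) :
    ‖⟪u,v⟫_ℂ‖ * ‖⟪v,w⟫_ℂ‖ - Real.sqrt (1 - ‖⟪u,v⟫_ℂ‖^2) * Real.sqrt (1 - ‖⟪v,w⟫_ℂ‖^2)
      ≤ ‖⟪u,w⟫_ℂ‖ := by
  set u' : E := u - ⟪v,u⟫_ℂ • v with hu'
  set w' : E := w - ⟪v,w⟫_ℂ • v with hw'
  have hvv : ⟪v,v⟫_ℂ = 1 := by
    rw [inner_self_eq_norm_sq_to_K, hv]; norm_num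
  have hdec : ⟪u,w⟫_ℂ = ⟪u,v⟫_ℂ * ⟪v,w⟫_ℂ + ⟪u',w'⟫_ℂ := by
    simp only [hu', hw', inner_sub_left, inner_sub_right, inner_smul_left, inner_smul_right,
      hvv, mul_one, inner_conj_symm]
    ring
  have hnu' : ‖u'‖^2 = 1 - ‖⟪u,v⟫_ℂ‖^2 := by
    have key : (⟪u',u'⟫_ℂ : ℂ) = 1 - (‖⟪u,v⟫_ℂ‖^2 : ℝ) := by
      simp only [hu', inner_sub_left, inner_sub_right, inner_smul_left, inner_smul_right,
        hvv, mul_one, inner_conj_symm]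
      rw [inner_self_eq_norm_sq_to_K, hu, ← inner_conj_symm u v]
      rw [sub_self, mul_zero, sub_zero, ← Complex.normSq_eq_conj_mul_self]
      simp only [Complex.norm_conj, Complex.normSq_eq_norm_sq]
      norm_num
    have h2 := inner_self_eq_norm_sq_to_K (𝕜 := ℂ) u'
    rw [key] at h2
    have h4 : (1 - ‖⟪u,v⟫_ℂ‖^2 : ℝ) = (‖u'‖^2 : ℝ) := by
      simpa [← Complex.ofReal_pow] using congrArg Complex.re h2
    linarith
  have hnw' : ‖w'‖^2 = 1 - ‖⟪v,w⟫_ℂ‖^2 := by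
    have key : (⟪w',w'⟫_ℂ : ℂ) = 1 - (‖⟪v,w⟫_ℂ‖^2 : ℝ) := by
      simp only [hw', inner_sub_left, inner_sub_right, inner_smul_left, inner_smul_right,
        hvv, mul_one, inner_conj_symm]
      rw [inner_self_eq_norm_sq_to_K, hw, ← inner_conj_symm w v]
      rw [sub_self, mul_zero, sub_zero, ← Complex.normSq_eq_conj_mul_self]
      simp [Complex.norm_conj, Complex.normSq_eq_norm_sq]
    have h2 := inner_self_eq_norm_sq_to_K (𝕜 := ℂ) w'
    rw [key] at h2
    have h4 : (1 - ‖⟪v,w⟫_ℂ‖^2 : ℝ) = (‖w'‖^2 : ℝ) := by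
      simpa [← Complex.ofReal_pow] using congrArg Complex.re h2
    linarith
  have hcs : ‖⟪u',w'⟫_ℂ‖ ≤ Real.sqrt (1 - ‖⟪u,v⟫_ℂ‖^2) * Real.sqrt (1 - ‖⟪v,w⟫_ℂ‖^2) := by
    calc ‖⟪u',w'⟫_ℂ‖ ≤ ‖u'‖ * ‖w'‖ := norm_inner_le_norm _ _
    _ = Real.sqrt (1 - ‖⟪u,v⟫_ℂ‖^2) * Real.sqrt (1 - ‖⟪v,w⟫_ℂ‖^2) := by
        rw [← hnu', ← hnw', Real.sqrt_sq (norm_nonneg _), Real.sqrt_sq (norm_nonneg _)]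
  have htri : ‖⟪u,v⟫_ℂ * ⟪v,w⟫_ℂ‖ ≤ ‖⟪u,v⟫_ℂ * ⟪v,w⟫_ℂ + ⟪u',w'⟫_ℂ‖ + ‖⟪u',w'⟫_ℂ‖ := by
    simpa using norm_sub_le (⟪u,v⟫_ℂ * ⟪v,w⟫_ℂ + ⟪u',w'⟫_ℂ) (⟪u',w'⟫_ℂ)
  rw [hdec]
  rw [norm_mul] at htri
  linarith


/-- trace of a PSD matrix is a (nonneg) real. -/
lemma psd_trace_real {S : Matrix n n ℂ} (hS : S.PosSemidef) :
    S.trace = ((S.trace).re : ℂ) := by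
  have h1 : S.trace = star S.trace := by
    conv_lhs => rw [← hS.1.eq]
    rw [trace_conjTranspose]
  have h2 : (S.trace).im = 0 := by
    have := congrArg Complex.im h1
    simp [Complex.conj_im] at this
    linarith
  exact (Complex.ext (by simp) (by simp [h2])).symm

lemma psd_trace_re_nonneg {S : Matrix n n ℂ} (hS : S.PosSemidef) :
    0 ≤ (S.trace).re := by
  have key : ∀ i, 0 ≤ (S i i).re := by
    intro i
    have h := hS.re_dotProduct_nonneg (Pi.single i 1)
    have e : star (Pi.single i 1 : n → ℂ) ⬝ᵥ (S *ᵥ Pi.single i 1) = S i i := by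
      simp [dotProduct, Matrix.mulVec, Pi.single_apply]
    rwa [e] at h
  rw [Matrix.trace]
  rw [Complex.re_sum]
  exact Finset.sum_nonneg fun i _ => key i

/-- entries of unitary matrices have norm at most 1 -/
lemma unitary_entry_norm_le {U : Matrix n n ℂ} (hU : U ∈ Matrix.unitaryGroup n ℂ)
    (i j : n) : ‖U i j‖ ≤ 1 := by
  have h1 : (star U * U) j j = 1 := by
    rw [Matrix.mem_unitaryGroup_iff'.mp hU]; simp
  have h2 : ∑ k, Complex.normSq (U k j) = 1 := by
    have : ((∑ k, Complex.normSq (U k j) : ℝ) : ℂ) = 1 := by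
      push_cast
      rw [← h1]
      simp only [Matrix.mul_apply, Matrix.star_apply, Matrix.star_apply]
      congr 1
      ext k
      exact Complex.normSq_eq_conj_mul_self
    exact_mod_cast this
  have h3 : Complex.normSq (U i j) ≤ 1 := by
    rw [← h2]
    exact Finset.single_le_sum (f := fun k => Complex.normSq (U k j))
      (fun k _ => Complex.normSq_nonneg _) (Finset.mem_univ i)
  have h4 : ‖U i j‖^2 ≤ 1 := by rwa [← Complex.sq_norm] at h3
  nlinarith [norm_nonneg (U i j)]

lemma psd_trace_unitary_le {S U : Matrix n n ℂ} (hS : S.PosSemidef)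
    (hU : U ∈ Matrix.unitaryGroup n ℂ) : ‖(S * U).trace‖ ≤ (S.trace).re := by
  set W : Matrix n n ℂ := ↑(hS.1.eigenvectorUnitary)
  have hW : W ∈ Matrix.unitaryGroup n ℂ := hS.1.eigenvectorUnitary.2
  set lam := hS.1.eigenvalues with hlam
  have hl0 : ∀ i, 0 ≤ lam i := hS.eigenvalues_nonneg
  set D : Matrix n n ℂ := diagonal (fun i => (lam i : ℂ)) with hD
  have hspec : S = W * D * Wᴴ := by
    have := hS.1.spectral_theorem
    rw [this]
    rfl
  set Y : Matrix n n ℂ := Wᴴ * U * W with hY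
  have hYu : Y ∈ Matrix.unitaryGroup n ℂ := by
    have e : Y = star W * U * W := by rw [hY, Matrix.star_eq_conjTranspose]
    rw [e]
    exact mul_mem (mul_mem (Unitary.star_mem hW) hU) hW
  have hWW : Wᴴ * W = 1 := by
    rw [← Matrix.star_eq_conjTranspose]; exact Matrix.mem_unitaryGroup_iff'.mp hW
  have htr : (S * U).trace = (D * Y).trace := by
    rw [hspec, show W * D * Wᴴ * U = W * (D * Wᴴ * U) by simp only [Matrix.mul_assoc],
      Matrix.trace_mul_comm W (D * Wᴴ * U), hY]
    congr 1
    simp only [Matrix.mul_assoc]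
  have htrS : (S.trace).re = ∑ i, lam i := by
    have : S.trace = ∑ i, ((lam i : ℂ)) := by
      rw [hspec, Matrix.trace_mul_comm (W * D) (Wᴴ), ← Matrix.mul_assoc, hWW, Matrix.one_mul,
        hD, Matrix.trace_diagonal]
    rw [this]
    simp [Complex.re_sum]
  rw [htr, htrS]
  have hDY : (D * Y).trace = ∑ i, (lam i : ℂ) * Y i i := by
    simp [Matrix.trace, Matrix.diag, hD, Matrix.diagonal_mul]
  rw [hDY]
  calc ‖∑ i, (lam i : ℂ) * Y i i‖ ≤ ∑ i, ‖(lam i : ℂ) * Y i i‖ := norm_sum_le _ _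
  _ ≤ ∑ i, lam i := by
      apply Finset.sum_le_sum
      intro i _
      rw [norm_mul, Complex.norm_real, Real.norm_of_nonneg (hl0 i)]
      calc lam i * ‖Y i i‖ ≤ lam i * 1 := by
            exact mul_le_mul_of_nonneg_left (unitary_entry_norm_le hYu i i) (hl0 i)
      _ = lam i := mul_one _
lemma polar_exists (M : Matrix n n ℂ) :
    ∃ U ∈ Matrix.unitaryGroup n ℂ,
      M = U * (Matrix.posSemidef_conjTranspose_mul_self M).sqrt := by
  set hH := Matrix.posSemidef_conjTranspose_mul_self M with hHdef
  set S := hH.sqrt with hSdef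
  have hS : S.PosSemidef := hH.posSemidef_sqrt
  set lam := hS.1.eigenvalues with hlam
  have hl0 : ∀ i, 0 ≤ lam i := hS.eigenvalues_nonneg
  set W : Matrix n n ℂ := ↑(hS.1.eigenvectorUnitary) with hWdef
  have hW : W ∈ Matrix.unitaryGroup n ℂ := (hS.1.eigenvectorUnitary).2
  set D : Matrix n n ℂ := diagonal (fun i => (lam i : ℂ)) with hD
  have hspec : S = W * D * Wᴴ := by
    have := hS.1.spectral_theorem
    rw [this]; rfl
  have hWW : Wᴴ * W = 1 := by
    rw [← Matrix.star_eq_conjTranspose]; exact Matrix.mem_unitaryGroup_iff'.mp hW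
  have hWW' : W * Wᴴ = 1 := by
    rw [← Matrix.star_eq_conjTranspose]; exact Matrix.mem_unitaryGroup_iff.mp hW
  have hWW2 : ∀ X : Matrix n n ℂ, Wᴴ * (W * X) = X := by
    intro X; rw [← Matrix.mul_assoc, hWW, Matrix.one_mul]
  have hWW2' : ∀ X : Matrix n n ℂ, W * (Wᴴ * X) = X := by
    intro X; rw [← Matrix.mul_assoc, hWW', Matrix.one_mul]
  have key : (M * W)ᴴ * (M * W) = D * D := by
    have hSS : S * S = Mᴴ * M := hH.sqrt_mul_self
    calc (M * W)ᴴ * (M * W) = Wᴴ * ((Mᴴ * M) * W) := by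
          rw [Matrix.conjTranspose_mul]; simp only [Matrix.mul_assoc]
      _ = Wᴴ * ((S * S) * W) := by rw [hSS]
      _ = D * D := by
          rw [hspec]
          simp only [Matrix.mul_assoc, hWW2, hWW2']
          rw [hWW, Matrix.mul_one]
  -- columns of M * W
  set col : n → EuclideanSpace ℂ n :=
    fun i => (WithLp.equiv 2 (n → ℂ)).symm (fun k => (M * W) k i) with hcol
  have hinner : ∀ i j, ⟪col i, col j⟫_ℂ = ((M * W)ᴴ * (M * W)) i j := by
    intro i j
    rw [PiLp.inner_apply]
    simp only [Matrix.mul_apply, Matrix.conjTranspose_apply]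
    exact Finset.sum_congr rfl fun k _ => by rw [RCLike.inner_apply]; exact mul_comm _ _
  set s : Set n := {i | lam i ≠ 0} with hs
  set v : n → EuclideanSpace ℂ n := fun i => ((lam i : ℂ))⁻¹ • col i with hv
  have horth : Orthonormal ℂ (s.restrict v) := by
    rw [orthonormal_iff_ite]
    rintro ⟨i, hi⟩ ⟨j, hj⟩
    simp only [Set.restrict, Set.domRestrict_apply, hv, inner_smul_left, inner_smul_right, hinner, key]
    rw [hD]
    rw [Matrix.diagonal_mul_diagonal, Matrix.diagonal_apply]
    by_cases hij : i = j
    · subst hij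
      have hne : (lam i : ℂ) ≠ 0 := Complex.ofReal_ne_zero.mpr hi
      simp only [if_true]
      rw [map_inv₀, Complex.conj_ofReal]
      field_simp
    · have : (⟨i, hi⟩ : s) ≠ ⟨j, hj⟩ := by simp [Subtype.mk_eq_mk, hij]
      simp [hij, this]
  obtain ⟨b, hb⟩ := horth.exists_orthonormalBasis_extension_of_card_eq
    (by simp [finrank_euclideanSpace])
  set B : Matrix n n ℂ := (EuclideanSpace.basisFun n ℂ).toBasis.toMatrix b.toBasis with hB
  have hBu : B ∈ Matrix.unitaryGroup n ℂ :=
    OrthonormalBasis.toMatrix_orthonormalBasis_mem_unitary _ _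
  have hBapp : ∀ k i, B k i = b i k := fun k i => rfl
  have hMW : M * W = B * D := by
    ext k i
    rw [hD, Matrix.mul_diagonal]
    by_cases hi : lam i = 0
    · have e0 : ((M * W)ᴴ * (M * W)) i i = 0 := by
        rw [key, hD, Matrix.diagonal_mul_diagonal, Matrix.diagonal_apply_eq, hi]
        norm_num
      have e1 : ∑ k', Complex.normSq ((M * W) k' i) = 0 := by
        have e2 : ((∑ k', Complex.normSq ((M * W) k' i) : ℝ) : ℂ) = 0 := by
          push_cast
          rw [← e0]
          simp only [Matrix.mul_apply, Matrix.conjTranspose_apply]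
          congr 1
          ext k'
          exact Complex.normSq_eq_conj_mul_self
        exact_mod_cast e2
      have e3 : Complex.normSq ((M * W) k i) = 0 :=
        (Finset.sum_eq_zero_iff_of_nonneg (fun k' _ => Complex.normSq_nonneg _)).mp e1 k
          (Finset.mem_univ k)
      rw [hi, Complex.normSq_eq_zero.mp e3]
      norm_num
    · have hbi : b i = v i := hb i hi
      have hB2 : B k i = ((lam i : ℂ))⁻¹ * (M * W) k i := by
        rw [hBapp, hbi]
        rfl
      rw [hB2]
      have hne : (lam i : ℂ) ≠ 0 := by exact_mod_cast hi
      field_simp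
  refine ⟨B * Wᴴ, ?_, ?_⟩
  · have hWh : Wᴴ ∈ Matrix.unitaryGroup n ℂ := by
      rw [← Matrix.star_eq_conjTranspose]; exact Unitary.star_mem hW
    exact mul_mem hBu hWh
  · have : (B * Wᴴ) * S = M := by
      rw [hspec]
      simp only [Matrix.mul_assoc]
      rw [hWW2]
      rw [← Matrix.mul_assoc, ← hMW, Matrix.mul_assoc, hWW', Matrix.mul_one]
    exact this.symm

lemma traceNorm_nonneg (M : Matrix n n ℂ) : 0 ≤ traceNorm M :=
  psd_trace_re_nonneg (Matrix.posSemidef_conjTranspose_mul_self M).posSemidef_sqrt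

lemma trace_mul_unitary_le (M U : Matrix n n ℂ) (hU : U ∈ Matrix.unitaryGroup n ℂ) :
    ‖(M * U).trace‖ ≤ traceNorm M := by
  obtain ⟨V, hV, hMV⟩ := polar_exists M
  set S := (Matrix.posSemidef_conjTranspose_mul_self M).sqrt with hSdef
  have hS : S.PosSemidef := (Matrix.posSemidef_conjTranspose_mul_self M).posSemidef_sqrt
  have e : (M * U).trace = (S * (U * V)).trace := by
    conv_lhs => rw [hMV]
    rw [Matrix.mul_assoc, Matrix.trace_mul_comm V (S * U), Matrix.mul_assoc]
  have htn : traceNorm M = (S.trace).re := rfl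
  rw [htn, e]
  exact psd_trace_unitary_le hS (mul_mem hU hV)

lemma exists_unitary_trace_eq (M : Matrix n n ℂ) :
    ∃ U ∈ Matrix.unitaryGroup n ℂ, (M * U).trace = (traceNorm M : ℂ) := by
  obtain ⟨V, hV, hMV⟩ := polar_exists M
  set S := (Matrix.posSemidef_conjTranspose_mul_self M).sqrt with hSdef
  have hS : S.PosSemidef := (Matrix.posSemidef_conjTranspose_mul_self M).posSemidef_sqrt
  refine ⟨star V, Unitary.star_mem hV, ?_⟩
  have e : (M * star V).trace = S.trace := by
    conv_lhs => rw [hMV]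
    rw [Matrix.mul_assoc, Matrix.trace_mul_comm V (S * star V), Matrix.mul_assoc,
      Matrix.mem_unitaryGroup_iff'.mp hV, Matrix.mul_one]
  rw [e]
  exact psd_trace_real hS

/-- embedding of matrices into Euclidean space -/
noncomputable def eMat (A : Matrix n n ℂ) : EuclideanSpace ℂ (n × n) :=
  (WithLp.equiv 2 (n × n → ℂ)).symm (fun p => A p.1 p.2)

lemma inner_eMat (A B : Matrix n n ℂ) : ⟪eMat A, eMat B⟫_ℂ = (Aᴴ * B).trace := by
  rw [PiLp.inner_apply, Matrix.trace]
  simp only [RCLike.inner_apply, Matrix.diag, Matrix.mul_apply, Matrix.conjTranspose_apply]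
  rw [Fintype.sum_prod_type, Finset.sum_comm]
  exact Finset.sum_congr rfl fun i _ => Finset.sum_congr rfl fun j _ => mul_comm _ _

lemma norm_eMat_one {A : Matrix n n ℂ} (h : (Aᴴ * A).trace = 1) : ‖eMat A‖ = 1 := by
  have h1 := inner_eMat A A
  rw [h, inner_self_eq_norm_sq_to_K] at h1
  have h2 : (‖eMat A‖^2 : ℝ) = 1 := by
    simpa [← Complex.ofReal_pow] using congrArg Complex.re h1
  nlinarith [norm_nonneg (eMat A)]

/-- the improved triangle inequality for the purified distance
P(ρ,σ) := √(1 - F(ρ,σ)): if P(ρ,σ)² + P(σ,τ)² ≤ 1 then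
P(ρ,τ) ≤ P(ρ,σ)·√F(σ,τ) + P(σ,τ)·√F(ρ,σ). -/
theorem purified_distance_improved_triangle
    (ρ σ τ : Matrix n n ℂ)
    (hρ : ρ.PosSemidef) (hσ : σ.PosSemidef) (hτ : τ.PosSemidef)
    (hρ1 : ρ.trace = 1) (hσ1 : σ.trace = 1) (hτ1 : τ.trace = 1)
    (h : (1 - fid ρ σ hρ hσ) + (1 - fid σ τ hσ hτ) ≤ 1) :
    Real.sqrt (1 - fid ρ τ hρ hτ) ≤
      Real.sqrt (1 - fid ρ σ hρ hσ) * Real.sqrt (fid σ τ hσ hτ) +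
        Real.sqrt (1 - fid σ τ hσ hτ) * Real.sqrt (fid ρ σ hρ hσ) := by
  simp only [fid] at h ⊢
  set R := hρ.sqrt with hRdef
  set Sg := hσ.sqrt with hSgdef
  set T := hτ.sqrt with hTdef
  have hRh : Rᴴ = R := hρ.posSemidef_sqrt.1
  have hSgh : Sgᴴ = Sg := hσ.posSemidef_sqrt.1
  have hTh : Tᴴ = T := hτ.posSemidef_sqrt.1
  set a := traceNorm (R * Sg) with ha
  set bb := traceNorm (Sg * T) with hbb
  set c := traceNorm (R * T) with hc
  obtain ⟨U1, hU1, hU1eq⟩ := exists_unitary_trace_eq (R * Sg)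
  obtain ⟨U2, hU2, hU2eq⟩ := exists_unitary_trace_eq (Sg * T)
  have hU1c : ∀ X : Matrix n n ℂ, U1ᴴ * (U1 * X) = X := by
    intro X
    rw [← Matrix.mul_assoc, ← Matrix.star_eq_conjTranspose,
      Matrix.mem_unitaryGroup_iff'.mp hU1, Matrix.one_mul]
  have hU1c' : ∀ X : Matrix n n ℂ, U1 * (U1ᴴ * X) = X := by
    intro X
    rw [← Matrix.mul_assoc, ← Matrix.star_eq_conjTranspose,
      Matrix.mem_unitaryGroup_iff.mp hU1, Matrix.one_mul]
  have hU2c' : ∀ X : Matrix n n ℂ, U2 * (U2ᴴ * X) = X := by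
    intro X
    rw [← Matrix.mul_assoc, ← Matrix.star_eq_conjTranspose,
      Matrix.mem_unitaryGroup_iff.mp hU2, Matrix.one_mul]
  set u := eMat (R * U1ᴴ) with hu
  set vv := eMat Sg with hvv
  set w := eMat (T * U2) with hw
  have hu1 : ‖u‖ = 1 := by
    apply norm_eMat_one
    rw [Matrix.conjTranspose_mul, Matrix.conjTranspose_conjTranspose, hRh,
      Matrix.trace_mul_comm (U1 * R) (R * U1ᴴ)]
    simp only [Matrix.mul_assoc]
    rw [hU1c]
    rw [hRdef, hρ.sqrt_mul_self, hρ1]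
  have hv1 : ‖vv‖ = 1 := by
    apply norm_eMat_one
    rw [hSgh, hSgdef, hσ.sqrt_mul_self, hσ1]
  have hw1 : ‖w‖ = 1 := by
    apply norm_eMat_one
    rw [Matrix.conjTranspose_mul, hTh, Matrix.trace_mul_comm (U2ᴴ * T) (T * U2)]
    simp only [Matrix.mul_assoc]
    rw [hU2c']
    rw [hTdef, hτ.sqrt_mul_self, hτ1]
  have hiuv : ⟪u, vv⟫_ℂ = (a : ℂ) := by
    rw [hu, hvv, inner_eMat, Matrix.conjTranspose_mul, Matrix.conjTranspose_conjTranspose, hRh,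
      Matrix.mul_assoc, Matrix.trace_mul_comm U1 (R * Sg)]
    exact hU1eq
  have hivw : ⟪vv, w⟫_ℂ = (bb : ℂ) := by
    rw [hvv, hw, inner_eMat, hSgh, ← Matrix.mul_assoc]
    exact hU2eq
  have hiuw : ‖⟪u, w⟫_ℂ‖ ≤ c := by
    have e : ⟪u, w⟫_ℂ = ((R * T) * (U2 * U1)).trace := by
      rw [hu, hw, inner_eMat, Matrix.conjTranspose_mul, Matrix.conjTranspose_conjTranspose, hRh,
        Matrix.mul_assoc, Matrix.trace_mul_comm U1 (R * (T * U2))]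
      simp only [Matrix.mul_assoc]
    rw [e]
    exact trace_mul_unitary_le (R * T) (U2 * U1) (mul_mem hU2 hU1)
  have ha0 : 0 ≤ a := traceNorm_nonneg _
  have hb0 : 0 ≤ bb := traceNorm_nonneg _
  have hc0 : 0 ≤ c := traceNorm_nonneg _
  have hna : ‖⟪u, vv⟫_ℂ‖ = a := by
    rw [hiuv, Complex.norm_real, Real.norm_of_nonneg ha0]
  have hnb : ‖⟪vv, w⟫_ℂ‖ = bb := by
    rw [hivw, Complex.norm_real, Real.norm_of_nonneg hb0]
  have ha1 : a ≤ 1 := by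
    rw [← hna]
    calc ‖⟪u, vv⟫_ℂ‖ ≤ ‖u‖ * ‖vv‖ := norm_inner_le_norm _ _
    _ = 1 := by rw [hu1, hv1]; norm_num
  have hb1 : bb ≤ 1 := by
    rw [← hnb]
    calc ‖⟪vv, w⟫_ℂ‖ ≤ ‖vv‖ * ‖w‖ := norm_inner_le_norm _ _
    _ = 1 := by rw [hv1, hw1]; norm_num
  have hkey : a * bb - Real.sqrt (1 - a^2) * Real.sqrt (1 - bb^2) ≤ c := by
    have := inner_three u vv w hu1 hv1 hw1
    rw [hna, hnb] at this
    linarith [hiuw]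
  -- final real arithmetic
  rw [Real.sqrt_sq ha0, Real.sqrt_sq hb0]
  set A := Real.sqrt (1 - a^2) with hA
  set B := Real.sqrt (1 - bb^2) with hB
  have hA0 : 0 ≤ A := Real.sqrt_nonneg _
  have hB0 : 0 ≤ B := Real.sqrt_nonneg _
  have hA2 : A^2 = 1 - a^2 := Real.sq_sqrt (by nlinarith)
  have hB2 : B^2 = 1 - bb^2 := Real.sq_sqrt (by nlinarith)
  have hAb : A ≤ bb := by
    have h1 : 1 - a^2 ≤ bb^2 := by nlinarith
    calc A = Real.sqrt (1 - a^2) := hA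
    _ ≤ Real.sqrt (bb^2) := Real.sqrt_le_sqrt h1
    _ = bb := Real.sqrt_sq hb0
  have hBa : B ≤ a := by
    have h1 : 1 - bb^2 ≤ a^2 := by nlinarith
    calc B = Real.sqrt (1 - bb^2) := hB
    _ ≤ Real.sqrt (a^2) := Real.sqrt_le_sqrt h1
    _ = a := Real.sqrt_sq ha0
  have h0 : 0 ≤ a * bb - A * B := by nlinarith [mul_le_mul hAb hBa hB0 hb0]
  have hid : (A * bb + B * a)^2 = 1 - (a * bb - A * B)^2 := by
    linear_combination (bb^2 + B^2) * hA2 + hB2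
  have h1c : 1 - c^2 ≤ (A * bb + B * a)^2 := by
    nlinarith [mul_self_le_mul_self h0 hkey]
  have final2 : Real.sqrt ((A * bb + B * a)^2) = A * bb + B * a :=
    Real.sqrt_sq (add_nonneg (mul_nonneg hA0 hb0) (mul_nonneg hB0 ha0))
  calc Real.sqrt (1 - c^2) ≤ Real.sqrt ((A * bb + B * a)^2) := Real.sqrt_le_sqrt h1c
  _ = A * bb + B * a := final2
end

section
/- Let r ≥ 0, and for ε ∈ [0,1) and κ ∈ [0,1] let η_min^ε be the minimum η ∈ [0,1] with (√(ηκ) + √((1-η)(1-κ)))² ≥ 1-ε. Then inf over α ∈ [0, 2^{-r}] and η ∈ [η_min^ε, 1] of log(max{η/α, (1-η)/(1-α)}) equals max{ r - log(1/η_min^ε), 0 }. -/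
/-- let r ≥ 0, ε ∈ [0,1), κ ∈ [0,1], and let ηmin be the least η ∈ [0,1]
with classical fidelity (√(ηκ) + √((1-η)(1-κ)))² ≥ 1-ε.  Then the infimum over
α ∈ [0, 2^{-r}] and η ∈ [ηmin, 1] of log₂(max{η/α, (1-η)/(1-α)}) — encoded, with the
convention 1/0 = +∞, as the infimum of log₂ s over all s with η ≤ sα and 1-η ≤ s(1-α) —
equals max{ r - log₂(1/ηmin), 0 } (which is 0 when ηmin = 0, by the convention
log(1/0) = +∞). -/
theorem smoothed_dmax_value (r ε κ ηmin : ℝ) (hr : 0 ≤ r)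
    (hε : ε ∈ Set.Ico (0 : ℝ) 1) (hκ : κ ∈ Set.Icc (0 : ℝ) 1)
    (hmin : IsLeast {η : ℝ | 0 ≤ η ∧ η ≤ 1 ∧
      1 - ε ≤ (Real.sqrt (η * κ) + Real.sqrt ((1 - η) * (1 - κ))) ^ 2} ηmin) :
    sInf {y : ℝ | ∃ α η s : ℝ, 0 ≤ α ∧ α ≤ (2 : ℝ) ^ (-r) ∧ ηmin ≤ η ∧ η ≤ 1 ∧
        0 ≤ s ∧ η ≤ s * α ∧ 1 - η ≤ s * (1 - α) ∧ y = Real.logb 2 s} =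
      if ηmin = 0 then 0 else max (r - Real.logb 2 (1 / ηmin)) 0 := by
  obtain ⟨⟨h0, h1, _⟩, _⟩ := hmin
  have h2rp : (0:ℝ) < (2:ℝ) ^ r := Real.rpow_pos_of_pos (by norm_num) _
  have h2rn : (0:ℝ) < (2:ℝ) ^ (-r) := Real.rpow_pos_of_pos (by norm_num) _
  have hinv : (2:ℝ) ^ (-r) = ((2:ℝ) ^ r)⁻¹ := Real.rpow_neg (by norm_num) r
  apply IsLeast.csInf_eq
  constructor
  · -- membership of the claimed value
    by_cases hη0 : ηmin = 0
    · simp only [hη0, if_true]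
      exact ⟨0, 0, 1, le_refl 0, le_of_lt h2rn, le_refl 0, zero_le_one,
        zero_le_one, by norm_num, by norm_num, by simp⟩
    · have hηpos : 0 < ηmin := lt_of_le_of_ne h0 (Ne.symm hη0)
      have hlogmul : Real.logb 2 (ηmin * (2:ℝ) ^ r) = Real.logb 2 ηmin + r := by
        rw [Real.logb_mul (ne_of_gt hηpos) (ne_of_gt h2rp),
          Real.logb_rpow (by norm_num) (by norm_num)]
      have hval : (if ηmin = 0 then (0:ℝ) else max (r - Real.logb 2 (1 / ηmin)) 0)
          = max (Real.logb 2 ηmin + r) 0 := by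
        rw [if_neg hη0, one_div, Real.logb_inv, sub_neg_eq_add, add_comm]
      rw [hval]
      by_cases hcase : 1 ≤ ηmin * (2:ℝ) ^ r
      · have hmax : max (Real.logb 2 ηmin + r) 0 = Real.logb 2 ηmin + r := by
          apply max_eq_left
          rw [← hlogmul]
          exact Real.logb_nonneg (by norm_num) hcase
        rw [hmax]
        refine ⟨(2:ℝ) ^ (-r), ηmin, ηmin * (2:ℝ) ^ r, le_of_lt h2rn, le_refl _,
          le_refl _, h1, by positivity, ?_, ?_, by rw [hlogmul]⟩
        · rw [hinv, mul_assoc, mul_inv_cancel₀ (ne_of_gt h2rp), mul_one]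
        · have : ηmin * (2:ℝ) ^ r * (1 - (2:ℝ) ^ (-r))
              = ηmin * (2:ℝ) ^ r - ηmin := by
            rw [hinv]; field_simp
          rw [this]; linarith
      · push_neg at hcase
        have hηle : ηmin ≤ (2:ℝ) ^ (-r) := by
          rw [hinv, ← one_div, le_div_iff₀ h2rp]
          linarith
        have hmax : max (Real.logb 2 ηmin + r) 0 = 0 := by
          apply max_eq_right
          rw [← hlogmul]
          exact Real.logb_nonpos (by norm_num) (by positivity) (le_of_lt hcase)
        rw [hmax]
        exact ⟨ηmin, ηmin, 1, h0, hηle, le_refl _, h1, zero_le_one,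
          by linarith, by linarith, by simp⟩
  · -- lower bound
    rintro y ⟨α, η, s, hα0, hα2, hηl, hη1, hs0, hc1, hc2, rfl⟩
    have hs1 : 1 ≤ s := by nlinarith
    have hlog0 : 0 ≤ Real.logb 2 s := Real.logb_nonneg (by norm_num) hs1
    by_cases hη0 : ηmin = 0
    · simp [hη0, hlog0]
    · have hηpos : 0 < ηmin := lt_of_le_of_ne h0 (Ne.symm hη0)
      rw [if_neg hη0]
      have hkey : ηmin * (2:ℝ) ^ r ≤ s := by
        have h2 : η ≤ s * (2:ℝ) ^ (-r) := le_trans hc1 (by nlinarith)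
        have : ηmin ≤ s * (2:ℝ) ^ (-r) := le_trans hηl h2
        rw [hinv] at this
        rw [mul_comm ηmin]
        calc (2:ℝ) ^ r * ηmin ≤ (2:ℝ) ^ r * (s * ((2:ℝ) ^ r)⁻¹) := by nlinarith
          _ = s := by field_simp
      refine max_le ?_ hlog0
      rw [one_div, Real.logb_inv, sub_neg_eq_add]
      have : Real.logb 2 (ηmin * (2:ℝ) ^ r) ≤ Real.logb 2 s :=
        Real.logb_le_logb_of_le (by norm_num) (by positivity) hkey
      rw [Real.logb_mul (ne_of_gt hηpos) (ne_of_gt h2rp),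
        Real.logb_rpow (by norm_num) (by norm_num)] at this
      linarith
end

section
/- Let |Hog⟩ be a unit vector in ℂ^8 such that |⟨Hog| P |Hog⟩| = 1/3 for every 3-qubit Pauli operator P ≠ 𝟙 (all 63 nontrivial Paulis). Let σ be any density matrix on ℂ^8 satisfying (1/8) Σ_{P ∈ 𝒫} |Tr(σP)| ≤ 1, where 𝒫 is the set of all 64 three-qubit Pauli operators. Then ⟨Hog| σ |Hog⟩ ≤ 5/12. -/
open Matrix Kronecker ComplexOrder

/-- The four single-qubit Pauli matrices 𝟙, X, Y, Z. -/
noncomputable def pauli1 : Fin 4 → Matrix (Fin 2) (Fin 2) ℂ :=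
  ![!![1, 0; 0, 1], !![0, 1; 1, 0], !![0, -Complex.I; Complex.I, 0], !![1, 0; 0, -1]]

/-- The 64 three-qubit Pauli operators. -/
noncomputable def pauli3 (a : Fin 4 × Fin 4 × Fin 4) :
    Matrix (Fin 2 × Fin 2 × Fin 2) (Fin 2 × Fin 2 × Fin 2) ℂ :=
  pauli1 a.1 ⊗ₖ (pauli1 a.2.1 ⊗ₖ pauli1 a.2.2)

set_option linter.unreachableTactic false
set_option linter.unusedTactic false

lemma pauli1_complete (i j k l : Fin 2) :
    ∑ a : Fin 4, pauli1 a j i * pauli1 a k l = if i = k ∧ j = l then 2 else 0 := by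
  fin_cases i <;> fin_cases j <;> fin_cases k <;> fin_cases l <;>
    simp [pauli1, Fin.sum_univ_four] <;> ring_nf <;>
    simp [Complex.I_sq] <;> ring

lemma pauli3_apply (a : Fin 4 × Fin 4 × Fin 4) (i j : Fin 2 × Fin 2 × Fin 2) :
    pauli3 a i j = pauli1 a.1 i.1 j.1 * (pauli1 a.2.1 i.2.1 j.2.1 * pauli1 a.2.2 i.2.2 j.2.2) := by
  simp [pauli3, Matrix.kroneckerMap_apply]

lemma sum_factor (F G H : Fin 4 → ℂ) :
    ∑ a : Fin 4 × Fin 4 × Fin 4, F a.1 * (G a.2.1 * H a.2.2)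
      = (∑ x, F x) * ((∑ x, G x) * (∑ x, H x)) := by
  rw [Fintype.sum_prod_type]
  simp_rw [Fintype.sum_prod_type, ← Finset.mul_sum, ← Finset.sum_mul]

lemma pauli3_complete (i j k l : Fin 2 × Fin 2 × Fin 2) :
    ∑ a : Fin 4 × Fin 4 × Fin 4, pauli3 a j i * pauli3 a k l
      = if i = k ∧ j = l then 8 else 0 := by
  have h : ∑ a : Fin 4 × Fin 4 × Fin 4, pauli3 a j i * pauli3 a k l
      = ∑ a : Fin 4 × Fin 4 × Fin 4,
          (pauli1 a.1 j.1 i.1 * pauli1 a.1 k.1 l.1) *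
          ((pauli1 a.2.1 j.2.1 i.2.1 * pauli1 a.2.1 k.2.1 l.2.1) *
           (pauli1 a.2.2 j.2.2 i.2.2 * pauli1 a.2.2 k.2.2 l.2.2)) := by
    refine Finset.sum_congr rfl fun a _ => ?_
    simp only [pauli3_apply]; ring
  rw [h, sum_factor (fun x => pauli1 x j.1 i.1 * pauli1 x k.1 l.1)
    (fun x => pauli1 x j.2.1 i.2.1 * pauli1 x k.2.1 l.2.1)
    (fun x => pauli1 x j.2.2 i.2.2 * pauli1 x k.2.2 l.2.2), pauli1_complete, pauli1_complete, pauli1_complete]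
  simp only [Prod.ext_iff]
  split_ifs <;> norm_num <;> tauto

lemma sigma_expand (σ : Matrix (Fin 2 × Fin 2 × Fin 2) (Fin 2 × Fin 2 × Fin 2) ℂ)
    (k l : Fin 2 × Fin 2 × Fin 2) :
    ∑ a : Fin 4 × Fin 4 × Fin 4, (σ * pauli3 a).trace * pauli3 a k l = 8 * σ k l := by
  have h : ∀ a : Fin 4 × Fin 4 × Fin 4, (σ * pauli3 a).trace * pauli3 a k l
      = ∑ i, ∑ j, σ i j * (pauli3 a j i * pauli3 a k l) := by
    intro a
    simp only [Matrix.trace, Matrix.diag, Matrix.mul_apply, Finset.sum_mul, mul_assoc]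
  simp_rw [h]
  rw [Finset.sum_comm]
  have h2 : ∀ i, ∑ a : Fin 4 × Fin 4 × Fin 4, ∑ j, σ i j * (pauli3 a j i * pauli3 a k l)
      = ∑ j, σ i j * ∑ a : Fin 4 × Fin 4 × Fin 4, pauli3 a j i * pauli3 a k l := by
    intro i
    rw [Finset.sum_comm]
    exact Finset.sum_congr rfl fun j _ => (Finset.mul_sum _ _ _).symm
  simp_rw [h2, pauli3_complete, ite_and]
  simp [Finset.sum_ite_eq, Finset.sum_ite_eq']
  ring

lemma overlap_expand (σ : Matrix (Fin 2 × Fin 2 × Fin 2) (Fin 2 × Fin 2 × Fin 2) ℂ)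
    (v : Fin 2 × Fin 2 × Fin 2 → ℂ) :
    8 * dotProduct (star v) (σ.mulVec v)
      = ∑ a : Fin 4 × Fin 4 × Fin 4,
          (σ * pauli3 a).trace * dotProduct (star v) ((pauli3 a).mulVec v) := by
  have h : ∀ a : Fin 4 × Fin 4 × Fin 4,
      (σ * pauli3 a).trace * dotProduct (star v) ((pauli3 a).mulVec v)
      = ∑ k, ∑ l, star (v k) * v l * ((σ * pauli3 a).trace * pauli3 a k l) := by
    intro a
    simp only [dotProduct, Matrix.mulVec, Pi.star_apply, Finset.mul_sum]
    refine Finset.sum_congr rfl fun k _ => Finset.sum_congr rfl fun l _ => ?_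
    ring
  rw [Finset.sum_congr rfl fun a _ => h a, Finset.sum_comm]
  have h2 : ∀ k, ∑ a : Fin 4 × Fin 4 × Fin 4, ∑ l,
        star (v k) * v l * ((σ * pauli3 a).trace * pauli3 a k l)
      = ∑ l, star (v k) * v l * (8 * σ k l) := by
    intro k
    rw [Finset.sum_comm]
    refine Finset.sum_congr rfl fun l _ => ?_
    rw [← Finset.mul_sum, sigma_expand]
  rw [Finset.sum_congr rfl fun k _ => h2 k]
  simp only [dotProduct, Matrix.mulVec, Pi.star_apply, Finset.mul_sum]
  refine Finset.sum_congr rfl fun k _ => Finset.sum_congr rfl fun l _ => ?_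
  ring

lemma pauli3_zero : pauli3 (0, 0, 0) = 1 := by
  have h1 : pauli1 0 = 1 := by
    ext i j
    fin_cases i <;> fin_cases j <;> simp [pauli1, Matrix.one_apply]
  simp [pauli3, h1, Matrix.one_kronecker_one]

/-- let |Hog⟩ ∈ ℂ^8 be a unit vector with |⟨Hog|P|Hog⟩| = 1/3 for every
nontrivial 3-qubit Pauli P, and let σ be a density matrix with stab-norm
(1/8)·Σ_P |Tr(σP)| ≤ 1.  Then ⟨Hog|σ|Hog⟩ ≤ 5/12. -/
theorem hoggar_overlap_bound
    (v : Fin 2 × Fin 2 × Fin 2 → ℂ)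
    (hv : dotProduct (star v) v = 1)
    (hHog : ∀ a : Fin 4 × Fin 4 × Fin 4, a ≠ (0, 0, 0) →
      ‖dotProduct (star v) ((pauli3 a).mulVec v)‖ = 1 / 3)
    (σ : Matrix (Fin 2 × Fin 2 × Fin 2) (Fin 2 × Fin 2 × Fin 2) ℂ)
    (hσ : σ.PosSemidef) (hσ1 : σ.trace = 1)
    (hst : (1 / 8 : ℝ) * ∑ a : Fin 4 × Fin 4 × Fin 4,
      ‖(σ * pauli3 a).trace‖ ≤ 1) :
    (dotProduct (star v) (σ.mulVec v)).re ≤ 5 / 12 := by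
  have key : dotProduct (star v) (σ.mulVec v)
      = (1/8 : ℂ) * ∑ a : Fin 4 × Fin 4 × Fin 4,
          (σ * pauli3 a).trace * dotProduct (star v) ((pauli3 a).mulVec v) := by
    rw [← overlap_expand]; ring
  have hre : (dotProduct (star v) (σ.mulVec v)).re
      ≤ ‖dotProduct (star v) (σ.mulVec v)‖ := Complex.re_le_norm _
  rw [key] at hre
  have h2 : ‖(1/8 : ℂ) * ∑ a : Fin 4 × Fin 4 × Fin 4,
        (σ * pauli3 a).trace * dotProduct (star v) ((pauli3 a).mulVec v)‖
      ≤ (1/8 : ℝ) * ∑ a : Fin 4 × Fin 4 × Fin 4,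
        ‖(σ * pauli3 a).trace‖
          * ‖dotProduct (star v) ((pauli3 a).mulVec v)‖ := by
    rw [norm_mul]
    have hab : ‖(1/8 : ℂ)‖ = (1/8 : ℝ) := by
      rw [norm_div]; simp
    rw [hab]
    have hsum := norm_sum_le Finset.univ
      (fun a : Fin 4 × Fin 4 × Fin 4 =>
        (σ * pauli3 a).trace * dotProduct (star v) ((pauli3 a).mulVec v))
    simp only [norm_mul] at hsum
    have : (0:ℝ) ≤ 1/8 := by norm_num
    exact mul_le_mul_of_nonneg_left hsum this
  -- decompose the sums at the identity Pauli
  have hT0 : ‖(σ * pauli3 (0,0,0)).trace‖ = 1 := by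
    rw [pauli3_zero, Matrix.mul_one, hσ1]; simp
  have hW0 : ‖dotProduct (star v) ((pauli3 (0,0,0)).mulVec v)‖ = 1 := by
    rw [pauli3_zero, Matrix.one_mulVec, hv]; simp
  have herrS : ∑ a : Fin 4 × Fin 4 × Fin 4, ‖(σ * pauli3 a).trace‖
      = 1 + ∑ a ∈ Finset.univ.erase ((0,0,0) : Fin 4 × Fin 4 × Fin 4),
          ‖(σ * pauli3 a).trace‖ := by
    rw [← Finset.add_sum_erase _ _ (Finset.mem_univ ((0,0,0) : Fin 4 × Fin 4 × Fin 4)), hT0]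
  have hdecomp : ∑ a : Fin 4 × Fin 4 × Fin 4,
        ‖(σ * pauli3 a).trace‖
          * ‖dotProduct (star v) ((pauli3 a).mulVec v)‖
      = 1 + (1/3 : ℝ) * ∑ a ∈ Finset.univ.erase ((0,0,0) : Fin 4 × Fin 4 × Fin 4),
          ‖(σ * pauli3 a).trace‖ := by
    rw [← Finset.add_sum_erase _ _ (Finset.mem_univ ((0,0,0) : Fin 4 × Fin 4 × Fin 4)),
      hT0, hW0, Finset.mul_sum]
    rw [Finset.sum_congr rfl fun a ha => by
      rw [hHog a (Finset.ne_of_mem_erase ha)]]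
    simp [mul_comm]
  rw [hdecomp] at h2
  rw [key]
  rw [herrS] at hst
  linarith
end
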